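/- For any positive integers N and g, there exists a connected finite simple graph G with difference index D(G) = 2, sum index S(G) ≥ N, and girth at least g. Consequently, the sum index cannot be bounded above by any function of the difference index, even for connected graphs. -/

import Mathlib

open SimpleGraph

/-- The sum index of a finite simple graph. -/
noncomputable def sumIndex {V : Type*} [Fintype V] (G : SimpleGraph V) : ℕ :=
  sInf {n | ∃ f : V → ℤ, Function.Injective f ∧
    {s : ℤ | ∃ u v, G.Adj u v ∧ s = f u + f v}.ncard = n}

/-- The difference index of a finite simple graph. -/
noncomputable def diffIndex {V : Type*} [Fintype V] (G : SimpleGraph V) : ℕ :=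
  sInf {n | ∃ f : V → ℤ, Function.Injective f ∧
    {s : ℤ | ∃ u v, G.Adj u v ∧ s = |f u - f v|}.ncard = n}

namespace S4

/-! ### Generic helper lemmas about walks -/

lemma telescope {V : Type} {G : SimpleGraph V} {A : Type} [AddCommGroup A] (ψ : V → A)
    {u v : V} (w : G.Walk u v) :
    (w.darts.map (fun d => ψ d.toProd.2 - ψ d.toProd.1)).sum = ψ v - ψ u := by
  induction w with
  | nil => simp
  | cons h p ih => simp [ih]

lemma edge_getVert_mem {V : Type} {G : SimpleGraph V} {u v : V} (w : G.Walk u v)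
    {i : ℕ} (hi : i < w.length) : s(w.getVert i, w.getVert (i+1)) ∈ w.edges := by
  induction w generalizing i with
  | nil => simp at hi
  | cons h p ih =>
    cases i with
    | zero => simp [Walk.getVert_zero, Walk.getVert_cons_succ]
    | succ n =>
      simp only [Walk.getVert_cons_succ, Walk.edges_cons, List.mem_cons]
      right
      exact ih (by simpa [Walk.length_cons, Nat.succ_lt_succ_iff] using hi)

lemma tail_get {V : Type} {G : SimpleGraph V} {u v : V} (w : G.Walk u v)
    {i : ℕ} (hi : i < w.support.tail.length) :
    w.support.tail[i] = w.getVert (i+1) := by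
  induction w generalizing i with
  | nil => simp at hi
  | cons h p ih =>
    simp only [Walk.support_cons, List.tail_cons] at *
    rw [Walk.getVert_cons_succ]
    rcases p with _ | ⟨h', p'⟩
    · simp at hi; simp [hi, Walk.getVert_zero]
    · cases i with
      | zero => simp [Walk.getVert_zero]
      | succ n =>
        have := ih (i := n) (by simpa using hi)
        simpa using this

lemma abs_sum_le {l : List ℤ} (h : ∀ x ∈ l, |x| ≤ 1) : |l.sum| ≤ l.length := by
  induction l with
  | nil => simp
  | cons a l ih =>
    simp only [List.sum_cons, List.length_cons]
    calc |a + l.sum| ≤ |a| + |l.sum| := abs_add_le _ _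
    _ ≤ 1 + l.length := by
        gcongr
        · exact h a (by simp)
        · exact ih (fun x hx => h x (by simp [hx]))
    _ = (l.length + 1 : ℕ) := by push_cast; ring

/-! ### The graph: `M` odd cycles of length `L`, consecutive cycles joined by an edge -/

/-- Step relation: unit steps along each block cycle, the closing edge of each block
cycle, and bridges between consecutive blocks. -/
def P (L : ℕ) {M : ℕ} (u v : Fin M × Fin L) : Prop :=
  (u.1 = v.1 ∧ (v.2 : ℕ) = (u.2 : ℕ) + 1) ∨
  (u.1 = v.1 ∧ (u.2 : ℕ) = 0 ∧ (v.2 : ℕ) = L - 1) ∨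
  ((v.1 : ℕ) = (u.1 : ℕ) + 1 ∧ (u.2 : ℕ) = L - 1 ∧ (v.2 : ℕ) = 0)

def G (M L : ℕ) : SimpleGraph (Fin M × Fin L) := SimpleGraph.fromRel (P L)

variable {M L : ℕ}

lemma adj_iff {u v : Fin M × Fin L} :
    (G M L).Adj u v ↔ u ≠ v ∧ (P L u v ∨ P L v u) := fromRel_adj _ _ _

lemma adj_cases {u v : Fin M × Fin L} (h : (G M L).Adj u v) :
    (u.1 = v.1 ∧ ((v.2 : ℕ) = (u.2 : ℕ) + 1 ∨ (u.2 : ℕ) = (v.2 : ℕ) + 1)) ∨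
    (u.1 = v.1 ∧ (((u.2 : ℕ) = 0 ∧ (v.2 : ℕ) = L - 1) ∨ ((v.2 : ℕ) = 0 ∧ (u.2 : ℕ) = L - 1))) ∨
    ((((v.1 : ℕ) = (u.1 : ℕ) + 1 ∧ (u.2 : ℕ) = L - 1 ∧ (v.2 : ℕ) = 0) ∨
      ((u.1 : ℕ) = (v.1 : ℕ) + 1 ∧ (v.2 : ℕ) = L - 1 ∧ (u.2 : ℕ) = 0))) := by
  rw [adj_iff] at h
  obtain ⟨-, h | h⟩ := h <;> rcases h with h | h | h <;> tauto

lemma adj_E1 {t : Fin M} {i j : Fin L} (hij : (j : ℕ) = (i : ℕ) + 1) :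
    (G M L).Adj (t, i) (t, j) := by
  rw [adj_iff]
  refine ⟨?_, Or.inl (Or.inl ⟨rfl, hij⟩)⟩
  simp only [ne_eq, Prod.mk.injEq, not_and]
  intro _ hj
  rw [hj] at hij; omega

lemma adj_E2 (hL : 3 ≤ L) {t : Fin M} {i j : Fin L} (hi : (i : ℕ) = 0) (hj : (j : ℕ) = L - 1) :
    (G M L).Adj (t, i) (t, j) := by
  rw [adj_iff]
  refine ⟨?_, Or.inl (Or.inr (Or.inl ⟨rfl, hi, hj⟩))⟩
  simp only [ne_eq, Prod.mk.injEq, not_and]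
  intro _ hij
  rw [hij] at hi; omega

lemma adj_E3 {t t' : Fin M} {i j : Fin L} (ht : (t' : ℕ) = (t : ℕ) + 1)
    (hi : (i : ℕ) = L - 1) (hj : (j : ℕ) = 0) :
    (G M L).Adj (t, i) (t', j) := by
  rw [adj_iff]
  refine ⟨?_, Or.inl (Or.inr (Or.inr ⟨ht, hi, hj⟩))⟩
  simp only [ne_eq, Prod.mk.injEq, not_and]
  intro ht' _
  rw [ht'] at ht; omega

/-! ### Connectivity -/

section conn
variable (hL : 3 ≤ L)
include hL

lemma reach_block (t : Fin M) (i : Fin L) :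
    (G M L).Reachable (t, ⟨0, by omega⟩) (t, i) := by
  obtain ⟨n, hn⟩ := i
  induction n with
  | zero => rfl
  | succ k ih =>
    exact (ih (by omega)).trans (Adj.reachable (adj_E1 (i := ⟨k, by omega⟩) rfl))

lemma reach_zero (hM : 0 < M) (t : Fin M) :
    (G M L).Reachable (⟨0, hM⟩, ⟨0, by omega⟩) (t, ⟨0, by omega⟩) := by
  obtain ⟨n, hn⟩ := t
  induction n with
  | zero => rfl
  | succ k ih =>
    refine ((ih (by omega)).trans ((reach_block hL _ ⟨L-1, by omega⟩).trans ?_))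
    exact Adj.reachable (adj_E3 (t' := ⟨k+1, hn⟩) rfl rfl rfl)

lemma conn (hM : 0 < M) : (G M L).Connected := by
  rw [connected_iff]
  refine ⟨fun u v => ?_, ⟨(⟨0, hM⟩, ⟨0, by omega⟩)⟩⟩
  have hu := (reach_zero hL hM u.1).trans (reach_block hL u.1 u.2)
  have hv := (reach_zero hL hM v.1).trans (reach_block hL v.1 v.2)
  exact hu.symm.trans hv

end conn

/-! ### The canonical labeling and the difference index -/

/-- The canonical labeling with differences 1 and L-1. -/
def f0 (M L : ℕ) : Fin M × Fin L → ℤ := fun p => (((p.2 : ℕ) + (p.1 : ℕ) * L : ℕ) : ℤ)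

lemma f0_inj : Function.Injective (f0 M L) := by
  rintro ⟨t, i⟩ ⟨t', i'⟩ h
  simp only [f0, Nat.cast_inj] at h
  have h1 : (i : ℕ) = (i' : ℕ) := by
    have := congrArg (· % L) h
    simpa [Nat.add_mul_mod_self_right, Nat.mod_eq_of_lt i.isLt, Nat.mod_eq_of_lt i'.isLt] using this
  have h2 : (t : ℕ) = (t' : ℕ) := by
    have := congrArg (· / L) h
    simpa [Nat.add_mul_div_right _ _ (show 0 < L from i.pos), Nat.div_eq_of_lt i.isLt,
      Nat.div_eq_of_lt i'.isLt] using this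
  exact Prod.ext (Fin.ext h2) (Fin.ext h1)

lemma f0_diff_cases (hL : 3 ≤ L) {u v : Fin M × Fin L} (h : (G M L).Adj u v) :
    |f0 M L u - f0 M L v| = 1 ∨ |f0 M L u - f0 M L v| = (L : ℤ) - 1 := by
  have habs1 : ∀ x : ℤ, (x = -1 ∨ x = 1) → |x| = 1 := by rintro x (rfl | rfl) <;> norm_num
  have habs2 : ∀ x : ℤ, (x = -((L:ℤ)-1) ∨ x = (L:ℤ)-1) → |x| = (L:ℤ)-1 := by
    rintro x (rfl | rfl)
    · rw [abs_neg, abs_of_nonneg (by push_cast; omega)]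
    · rw [abs_of_nonneg (by push_cast; omega)]
  obtain ⟨t, i⟩ := u
  obtain ⟨t', j⟩ := v
  rcases adj_cases h with ⟨ht, hn | hn⟩ | ⟨ht, ⟨h1, h2⟩ | ⟨h1, h2⟩⟩ | ⟨ht, h1, h2⟩ | ⟨ht, h1, h2⟩
  · left; apply habs1
    simp only at ht hn
    subst ht
    simp only [f0]
    left; push_cast; omega
  · left; apply habs1
    simp only at ht hn
    subst ht
    simp only [f0]
    right; push_cast; omega
  · right; apply habs2
    simp only at ht h1 h2
    subst ht
    simp only [f0]
    left; push_cast; omega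
  · right; apply habs2
    simp only at ht h1 h2
    subst ht
    simp only [f0]
    right; push_cast; omega
  · left; apply habs1
    simp only at ht h1 h2
    simp only [f0]
    left
    have hb : ((t' : ℕ) : ℤ) * L = ((t : ℕ) : ℤ) * L + L := by
      rw [show ((t' : ℕ) : ℤ) = ((t : ℕ) : ℤ) + 1 by exact_mod_cast congrArg (Nat.cast : ℕ → ℤ) ht]
      ring
    push_cast
    push_cast at hb
    omega
  · left; apply habs1
    simp only at ht h1 h2
    simp only [f0]
    right
    have hb : ((t : ℕ) : ℤ) * L = ((t' : ℕ) : ℤ) * L + L := by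
      rw [show ((t : ℕ) : ℤ) = ((t' : ℕ) : ℤ) + 1 by exact_mod_cast congrArg (Nat.cast : ℕ → ℤ) ht]
      ring
    push_cast
    push_cast at hb
    omega

lemma diffset_f0 (hL : 3 ≤ L) (hM : 0 < M) :
    {s : ℤ | ∃ u v, (G M L).Adj u v ∧ s = |f0 M L u - f0 M L v|} = {1, ((L:ℤ) - 1)} := by
  ext s
  simp only [Set.mem_setOf_eq, Set.mem_insert_iff, Set.mem_singleton_iff]
  constructor
  · rintro ⟨u, v, hadj, rfl⟩
    exact f0_diff_cases hL hadj
  · rintro (rfl | rfl)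
    · refine ⟨(⟨0, hM⟩, ⟨1, by omega⟩), (⟨0, hM⟩, ⟨0, by omega⟩), (adj_E1 (by simp)).symm, ?_⟩
      simp [f0]
    · refine ⟨(⟨0, hM⟩, ⟨L-1, by omega⟩), (⟨0, hM⟩, ⟨0, by omega⟩), (adj_E2 hL rfl rfl).symm, ?_⟩
      simp [f0]
      omega

def Dset (f : Fin M × Fin L → ℤ) : Set ℤ :=
  {s : ℤ | ∃ u v, (G M L).Adj u v ∧ s = |f u - f v|}

lemma Dset_finite (f : Fin M × Fin L → ℤ) : (Dset f).Finite := by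
  apply Set.Finite.subset (Set.finite_univ.image
    (fun p : (Fin M × Fin L) × (Fin M × Fin L) => |f p.1 - f p.2|))
  rintro s ⟨u, v, -, rfl⟩
  exact ⟨(u, v), trivial, rfl⟩

lemma two_neighbors (hL : 3 ≤ L) (z : Fin M) (i : Fin L) :
    ∃ j₁ j₂ : Fin L, j₁ ≠ j₂ ∧ (G M L).Adj (z, i) (z, j₁) ∧ (G M L).Adj (z, i) (z, j₂) := by
  by_cases h0 : (i : ℕ) = 0
  · refine ⟨⟨1, by omega⟩, ⟨L - 1, by omega⟩, ?_, adj_E1 (by simp only [Fin.val_mk]; omega),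
      adj_E2 hL h0 (by simp)⟩
    simp only [ne_eq, Fin.ext_iff, Fin.val_mk]; omega
  · by_cases htop : (i : ℕ) = L - 1
    · refine ⟨⟨L - 2, by omega⟩, ⟨0, by omega⟩, ?_,
        (adj_E1 (i := (⟨L - 2, by omega⟩ : Fin L)) (by simp only [Fin.val_mk]; omega)).symm,
        (adj_E2 hL (by simp) htop).symm⟩
      simp only [ne_eq, Fin.ext_iff, Fin.val_mk]; omega
    · refine ⟨⟨(i : ℕ) - 1, by omega⟩, ⟨(i : ℕ) + 1, by omega⟩, ?_,
        (adj_E1 (i := (⟨(i : ℕ) - 1, by omega⟩ : Fin L)) (by simp only [Fin.val_mk]; omega)).symm,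
        adj_E1 (by simp)⟩
      simp only [ne_eq, Fin.ext_iff, Fin.val_mk]; omega

lemma dind_lower (hL : 3 ≤ L) (hM : 0 < M) (f : Fin M × Fin L → ℤ)
    (hf : Function.Injective f) : 2 ≤ (Dset (M := M) (L := L) f).ncard := by
  have hfin := Dset_finite (M := M) (L := L) f
  set z : Fin M := ⟨0, hM⟩
  have hedge : (G M L).Adj (z, (⟨0, by omega⟩ : Fin L)) (z, ⟨1, by omega⟩) :=
    adj_E1 (by simp)
  have hne : (Dset (M := M) (L := L) f).Nonempty := ⟨_, _, _, hedge, rfl⟩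
  rcases Nat.lt_or_ge ((Dset (M := M) (L := L) f).ncard) 2 with hlt | hge
  · exfalso
    interval_cases h : (Dset (M := M) (L := L) f).ncard
    · exact absurd ((Set.ncard_pos hfin).mpr hne) (by omega)
    · obtain ⟨d, hd⟩ := Set.ncard_eq_one.mp h
      obtain ⟨imax, -, hmax⟩ := Finset.exists_max_image (Finset.univ : Finset (Fin L))
        (fun i => f (z, i)) ⟨⟨0, by omega⟩, Finset.mem_univ _⟩
      obtain ⟨j₁, j₂, hj12, hj1, hj2⟩ := two_neighbors hL z imax
      have h1 : |f (z, imax) - f (z, j₁)| = d := by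
        have : |f (z, imax) - f (z, j₁)| ∈ Dset (M := M) (L := L) f := ⟨_, _, hj1, rfl⟩
        rwa [hd, Set.mem_singleton_iff] at this
      have h2 : |f (z, imax) - f (z, j₂)| = d := by
        have : |f (z, imax) - f (z, j₂)| ∈ Dset (M := M) (L := L) f := ⟨_, _, hj2, rfl⟩
        rwa [hd, Set.mem_singleton_iff] at this
      have e1 : f (z, imax) - f (z, j₁) = d := by
        rw [← h1, abs_of_nonneg]; simp [sub_nonneg, hmax j₁ (Finset.mem_univ _)]
      have e2 : f (z, imax) - f (z, j₂) = d := by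
        rw [← h2, abs_of_nonneg]; simp [sub_nonneg, hmax j₂ (Finset.mem_univ _)]
      have : f (z, j₁) = f (z, j₂) := by omega
      have := hf this
      simp only [Prod.mk.injEq] at this
      exact hj12 this.2
  · exact hge

/-! ### The sum index lower bound -/

def SSet (f : Fin M × Fin L → ℤ) : Set ℤ :=
  {s : ℤ | ∃ u v, (G M L).Adj u v ∧ s = f u + f v}

lemma SSet_finite (f : Fin M × Fin L → ℤ) : (SSet f).Finite := by
  apply Set.Finite.subset (Set.finite_univ.image
    (fun p : (Fin M × Fin L) × (Fin M × Fin L) => f p.1 + f p.2))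
  rintro s ⟨u, v, -, rfl⟩
  exact ⟨(u, v), trivial, rfl⟩

/-- the cyclic successor within a block -/
def nxt (L : ℕ) (i : Fin L) : Fin L :=
  if h : (i : ℕ) + 1 < L then ⟨(i : ℕ) + 1, h⟩ else ⟨0, by omega⟩

lemma adj_nxt (hL : 3 ≤ L) (t : Fin M) (i : Fin L) :
    (G M L).Adj (t, i) (t, nxt L i) := by
  unfold nxt
  split_ifs with h
  · exact adj_E1 rfl
  · exact (adj_E2 hL rfl (by have := i.isLt; omega)).symm

lemma sum_lb (hL : 3 ≤ L) (hodd : Odd L) (f : Fin M × Fin L → ℤ)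
    (hf : Function.Injective f) : M ≤ (SSet (M := M) (L := L) f).ncard ^ L := by
  classical
  have hfin := SSet_finite (M := M) (L := L) f
  set E := hfin.toFinset with hE
  have hcard : (SSet (M := M) (L := L) f).ncard = E.card := Set.ncard_eq_toFinset_card _ hfin
  have hmem : ∀ (t : Fin M) (i : Fin L), f (t, i) + f (t, nxt L i) ∈ E := by
    intro t i
    rw [hE, Set.Finite.mem_toFinset]
    exact ⟨_, _, adj_nxt hL t i, rfl⟩
  let Φ : Fin M → (Fin L → E) := fun t i => ⟨f (t, i) + f (t, nxt L i), hmem t i⟩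
  have hΦ : Function.Injective Φ := by
    intro t t' h
    have hs : ∀ i : Fin L, f (t, i) + f (t, nxt L i) = f (t', i) + f (t', nxt L i) := by
      intro i
      have := congrFun h i
      exact congrArg Subtype.val this
    -- key alternating identity
    have key : ∀ n (hn : n < L),
        f (t, ⟨n, hn⟩) - f (t', ⟨n, hn⟩) =
          (-1 : ℤ) ^ n * (f (t, ⟨0, by omega⟩) - f (t', ⟨0, by omega⟩)) := by
      intro n
      induction n with
      | zero => intro hn; simp
      | succ k ih =>
        intro hn
        have hk : k < L := by omega
        have hnxt : nxt L (⟨k, hk⟩ : Fin L) = ⟨k + 1, hn⟩ := by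
          unfold nxt
          rw [dif_pos (by simpa using hn)]
        have := hs ⟨k, hk⟩
        rw [hnxt] at this
        have ihk := ih hk
        rw [pow_succ]
        nlinarith [ihk, this]
    -- closing edge
    have hLpos : 0 < L := by omega
    have hlast : L - 1 < L := by omega
    have hnxtlast : nxt L (⟨L - 1, hlast⟩ : Fin L) = ⟨0, hLpos⟩ := by
      unfold nxt
      rw [dif_neg (by simp only [Fin.val_mk]; omega)]
    have hclose := hs ⟨L - 1, hlast⟩
    rw [hnxtlast] at hclose
    have hkey := key (L - 1) hlast
    have hpow : (-1 : ℤ) ^ (L - 1) = 1 := by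
      apply Even.neg_one_pow
      rcases hodd with ⟨m, hm⟩
      exact ⟨m, by omega⟩
    rw [hpow, one_mul] at hkey
    have hzero : f (t, (⟨0, hLpos⟩ : Fin L)) = f (t', ⟨0, hLpos⟩) := by
      have h0 : f (t, (⟨0, hLpos⟩ : Fin L)) - f (t', ⟨0, hLpos⟩) = 0 := by linarith
      linarith
    have := hf hzero
    simp only [Prod.mk.injEq] at this
    exact this.1
  calc M = Fintype.card (Fin M) := (Fintype.card_fin M).symm
  _ ≤ Fintype.card (Fin L → E) := Fintype.card_le_of_injective Φ hΦ
  _ = E.card ^ L := by simp [Fintype.card_fun]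
  _ = _ := by rw [hcard]

/-! ### Girth: every cycle has length at least `L` -/

lemma walk_block {u v : Fin M × Fin L} (w : (G M L).Walk u v)
    (h : ∀ d ∈ w.darts, (d.toProd.1).1 = (d.toProd.2).1) :
    ∀ x ∈ w.support, x.1 = u.1 := by
  induction w with
  | nil => intro x hx; simp at hx; rw [hx]
  | cons ha p ih =>
    intro x hx
    rcases List.mem_cons.mp (by simpa using hx) with rfl | hx'
    · rfl
    · have h1 : ∀ d ∈ p.darts, (d.toProd.1).1 = (d.toProd.2).1 := by
        intro d hd; exact h d (by simp [hd])
      have h0 := h ⟨(_, _), ha⟩ (by simp)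
      rw [ih h1 x hx']
      exact h0.symm

/-- No cycle contains a dart crossing between blocks. -/
lemma no_cross {v : Fin M × Fin L} (w : (G M L).Walk v v) (hc : w.IsCycle)
    {d₀ : (G M L).Dart} (hd₀m : d₀ ∈ w.darts) (hd₀ : (d₀.toProd.1).1 ≠ (d₀.toProd.2).1) :
    False := by
  classical
  -- normalize the bridge dart
  obtain ⟨x, y, hxy1, hxy2, hxy3, hedge⟩ :
      ∃ x y : Fin M × Fin L, ((y.1 : ℕ) = (x.1 : ℕ) + 1) ∧ ((x.2 : ℕ) = L - 1) ∧
        ((y.2 : ℕ) = 0) ∧ d₀.edge = s(x, y) := by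
    rcases adj_cases d₀.adj with ⟨ht, -⟩ | ⟨ht, -⟩ | ⟨ht, h1, h2⟩ | ⟨ht, h1, h2⟩
    · exact absurd ht hd₀
    · exact absurd ht hd₀
    · exact ⟨d₀.toProd.1, d₀.toProd.2, ht, h1, h2, rfl⟩
    · exact ⟨d₀.toProd.2, d₀.toProd.1, ht, h1, h2, Sym2.eq_swap⟩
  set tstar : ℕ := (x.1 : ℕ) with htstar
  set χ : Fin M × Fin L → ZMod 2 := fun p => if (p.1 : ℕ) ≤ tstar then 1 else 0 with hχ
  have tele := telescope χ w
  rw [sub_self] at tele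
  -- split darts at d₀
  obtain ⟨l₁, l₂, hsplit⟩ := List.append_of_mem hd₀m
  have hnodup : (l₁.map Dart.edge ++ d₀.edge :: l₂.map Dart.edge).Nodup := by
    have := hc.isCircuit.isTrail.edges_nodup
    rwa [Walk.edges, hsplit, List.map_append, List.map_cons] at this
  have hnotmem : d₀.edge ∉ l₁.map Dart.edge ∧ d₀.edge ∉ l₂.map Dart.edge := by
    rw [List.nodup_append] at hnodup
    obtain ⟨-, h2, h3⟩ := hnodup
    exact ⟨fun hm => h3 _ hm _ (by simp) rfl, (List.nodup_cons.mp h2).1⟩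
  -- all other darts contribute 0
  have hterm0 : ∀ d : (G M L).Dart, d ∈ w.darts → d.edge ≠ d₀.edge →
      χ d.toProd.2 - χ d.toProd.1 = 0 := by
    intro d hdm hdne
    rcases adj_cases d.adj with ⟨ht, -⟩ | ⟨ht, -⟩ | ⟨ht, h1, h2⟩ | ⟨ht, h1, h2⟩
    · have : χ d.toProd.1 = χ d.toProd.2 := by simp only [hχ]; rw [ht]
      rw [this, sub_self]
    · have : χ d.toProd.1 = χ d.toProd.2 := by simp only [hχ]; rw [ht]
      rw [this, sub_self]
    · -- E3 with fst lower
      have hne : ((d.toProd.1.1 : ℕ)) ≠ tstar := by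
        intro heq
        apply hdne
        rw [hedge]
        have e1 : d.toProd.1 = x := by
          apply Prod.ext <;> apply Fin.ext
          · rw [heq]
          · rw [h1, hxy2]
        have e2 : d.toProd.2 = y := by
          apply Prod.ext <;> apply Fin.ext
          · rw [ht, heq, hxy1]
          · rw [h2, hxy3]
        rw [show d.edge = s(d.toProd.1, d.toProd.2) from rfl, e1, e2]
      have : χ d.toProd.1 = χ d.toProd.2 := by
        simp only [hχ]
        have hiff : ((d.toProd.1.1 : ℕ) ≤ tstar) ↔ ((d.toProd.2.1 : ℕ) ≤ tstar) := by omega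
        by_cases hcond : ((d.toProd.1.1 : ℕ) ≤ tstar)
        · rw [if_pos hcond, if_pos (hiff.mp hcond)]
        · rw [if_neg hcond, if_neg (fun hco => hcond (hiff.mpr hco))]
      rw [this, sub_self]
    · -- E3 with snd lower
      have hne : ((d.toProd.2.1 : ℕ)) ≠ tstar := by
        intro heq
        apply hdne
        rw [hedge]
        have e1 : d.toProd.2 = x := by
          apply Prod.ext <;> apply Fin.ext
          · rw [heq]
          · rw [h1, hxy2]
        have e2 : d.toProd.1 = y := by
          apply Prod.ext <;> apply Fin.ext
          · rw [ht, heq, hxy1]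
          · rw [h2, hxy3]
        rw [show d.edge = s(d.toProd.1, d.toProd.2) from rfl, e1, e2, Sym2.eq_swap]
      have : χ d.toProd.1 = χ d.toProd.2 := by
        simp only [hχ]
        have hiff : ((d.toProd.1.1 : ℕ) ≤ tstar) ↔ ((d.toProd.2.1 : ℕ) ≤ tstar) := by omega
        by_cases hcond : ((d.toProd.1.1 : ℕ) ≤ tstar)
        · rw [if_pos hcond, if_pos (hiff.mp hcond)]
        · rw [if_neg hcond, if_neg (fun hco => hcond (hiff.mpr hco))]
      rw [this, sub_self]
  have htermd : χ d₀.toProd.2 - χ d₀.toProd.1 = 1 := by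
    have hx1 : χ x = 1 := by simp only [hχ]; rw [if_pos (le_refl _)]
    have hy0 : χ y = 0 := by
      simp only [hχ]
      rw [if_neg (by omega)]
    rcases dart_edge_eq_mk'_iff'.mp hedge with ⟨e1, e2⟩ | ⟨e1, e2⟩
    · rw [show d₀.toProd.1 = x from e1, show d₀.toProd.2 = y from e2, hx1, hy0]; decide
    · rw [show d₀.toProd.1 = y from e1, show d₀.toProd.2 = x from e2, hx1, hy0]; decide
  -- now compute the telescoping sum
  rw [hsplit, List.map_append, List.sum_append, List.map_cons, List.sum_cons] at tele
  have hz1 : (l₁.map (fun d => χ d.toProd.2 - χ d.toProd.1)).sum = 0 := by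
    apply List.sum_eq_zero
    intro z hz
    obtain ⟨d, hd, rfl⟩ := List.mem_map.mp hz
    refine hterm0 d (by rw [hsplit]; simp [hd]) ?_
    intro he
    exact hnotmem.1 (he ▸ List.mem_map_of_mem (f := Dart.edge) hd)
  have hz2 : (l₂.map (fun d => χ d.toProd.2 - χ d.toProd.1)).sum = 0 := by
    apply List.sum_eq_zero
    intro z hz
    obtain ⟨d, hd, rfl⟩ := List.mem_map.mp hz
    refine hterm0 d (by rw [hsplit]; simp [hd]) ?_
    intro he
    exact hnotmem.2 (he ▸ List.mem_map_of_mem (f := Dart.edge) hd)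
  rw [hz1, hz2, htermd] at tele
  simp at tele

lemma cycle_long (hL : 3 ≤ L) {v : Fin M × Fin L} (w : (G M L).Walk v v)
    (hc : w.IsCycle) : L ≤ w.length := by
  classical
  have hcross : ∀ d ∈ w.darts, (d.toProd.1).1 = (d.toProd.2).1 := by
    intro d hd
    by_contra hne
    exact no_cross w hc hd hne
  have hblock : ∀ x ∈ w.support, x.1 = v.1 := walk_block w hcross
  set ψ : Fin M × Fin L → ℤ := fun p => ((p.2 : ℕ) : ℤ) with hψ
  have tele := telescope ψ w
  rw [sub_self] at tele
  have hL0 : 0 < L := by omega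
  set e₂ : Sym2 (Fin M × Fin L) := s((v.1, ⟨0, hL0⟩), (v.1, ⟨L - 1, by omega⟩)) with he₂def
  -- classification of darts
  have hclass : ∀ d : (G M L).Dart, d ∈ w.darts →
      d.edge = e₂ ∨ (ψ d.toProd.2 - ψ d.toProd.1 = 1 ∨ ψ d.toProd.2 - ψ d.toProd.1 = -1) := by
    intro d hd
    have hb1 : (d.toProd.1).1 = v.1 :=
      hblock _ (w.dart_fst_mem_support_of_mem_darts hd)
    have hb2 : (d.toProd.2).1 = v.1 :=
      hblock _ (w.dart_snd_mem_support_of_mem_darts hd)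
    rcases adj_cases d.adj with ⟨ht, hn | hn⟩ | ⟨ht, ⟨h1, h2⟩ | ⟨h1, h2⟩⟩ | ⟨ht, -, -⟩ | ⟨ht, -, -⟩
    · right; left; simp only [hψ]; omega
    · right; right; simp only [hψ]; omega
    · left
      have e1 : d.toProd.1 = (v.1, (⟨0, hL0⟩ : Fin L)) := by
        apply Prod.ext
        · exact hb1
        · exact Fin.ext h1
      have e2 : d.toProd.2 = (v.1, (⟨L - 1, by omega⟩ : Fin L)) := by
        apply Prod.ext
        · exact hb2
        · exact Fin.ext h2
      rw [show d.edge = s(d.toProd.1, d.toProd.2) from rfl, e1, e2, he₂def]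
    · left
      have e1 : d.toProd.2 = (v.1, (⟨0, hL0⟩ : Fin L)) := by
        apply Prod.ext
        · exact hb2
        · exact Fin.ext h1
      have e2 : d.toProd.1 = (v.1, (⟨L - 1, by omega⟩ : Fin L)) := by
        apply Prod.ext
        · exact hb1
        · exact Fin.ext h2
      rw [show d.edge = s(d.toProd.1, d.toProd.2) from rfl, e1, e2, he₂def, Sym2.eq_swap]
    · exact absurd (hb1.trans hb2.symm) (by intro hh; rw [hh] at ht; omega)
    · exact absurd (hb1.trans hb2.symm) (by intro hh; rw [hh] at ht; omega)
  by_cases he₂ : e₂ ∈ w.edges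
  · -- uses the closing edge: length is at least L
    obtain ⟨dstar, hdsm, hdse⟩ := List.mem_map.mp he₂
    obtain ⟨l₁, l₂, hsplit⟩ := List.append_of_mem hdsm
    have hnodup : (l₁.map Dart.edge ++ dstar.edge :: l₂.map Dart.edge).Nodup := by
      have := hc.isCircuit.isTrail.edges_nodup
      rwa [Walk.edges, hsplit, List.map_append, List.map_cons] at this
    have hnotmem : dstar.edge ∉ l₁.map Dart.edge ∧ dstar.edge ∉ l₂.map Dart.edge := by
      rw [List.nodup_append] at hnodup
      obtain ⟨-, h2, h3⟩ := hnodup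
      exact ⟨fun hm => h3 _ hm _ (by simp) rfl, (List.nodup_cons.mp h2).1⟩
    have hother : ∀ d ∈ l₁ ++ l₂, |ψ d.toProd.2 - ψ d.toProd.1| ≤ 1 := by
      intro d hd
      have hdm : d ∈ w.darts := by
        rw [hsplit]
        rcases List.mem_append.mp hd with h | h
        · simp [h]
        · simp [h]
      have hdne : d.edge ≠ e₂ := by
        intro he
        rcases List.mem_append.mp hd with h | h
        · exact hnotmem.1 ((he.trans hdse.symm) ▸ List.mem_map_of_mem (f := Dart.edge) h)
        · exact hnotmem.2 ((he.trans hdse.symm) ▸ List.mem_map_of_mem (f := Dart.edge) h)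
      rcases hclass d hdm with h | h | h
      · exact absurd h hdne
      · rw [h]; norm_num
      · rw [h]; norm_num
    have hτ : |ψ dstar.toProd.2 - ψ dstar.toProd.1| = (L : ℤ) - 1 := by
      rcases dart_edge_eq_mk'_iff'.mp hdse with ⟨e1, e2⟩ | ⟨e1, e2⟩
      · rw [e1, e2]
        simp only [hψ]
        rw [show ((((v.1, (⟨L-1, by omega⟩ : Fin L)).2 : Fin L) : ℕ) : ℤ)
            - ((((v.1, (⟨0, hL0⟩ : Fin L)).2 : Fin L) : ℕ) : ℤ) = (L : ℤ) - 1 by push_cast; omega]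
        rw [abs_of_nonneg (by omega)]
      · rw [e1, e2]
        simp only [hψ]
        rw [show ((((v.1, (⟨0, hL0⟩ : Fin L)).2 : Fin L) : ℕ) : ℤ)
            - ((((v.1, (⟨L-1, by omega⟩ : Fin L)).2 : Fin L) : ℕ) : ℤ)
            = -((L : ℤ) - 1) by push_cast; omega]
        rw [abs_neg, abs_of_nonneg (by omega)]
    rw [hsplit, List.map_append, List.sum_append, List.map_cons, List.sum_cons] at tele
    have hS : |(l₁.map (fun d => ψ d.toProd.2 - ψ d.toProd.1)).sum
        + (l₂.map (fun d => ψ d.toProd.2 - ψ d.toProd.1)).sum| ≤ (l₁.length : ℤ) + l₂.length := by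
      calc _ ≤ |(l₁.map (fun d => ψ d.toProd.2 - ψ d.toProd.1)).sum|
            + |(l₂.map (fun d => ψ d.toProd.2 - ψ d.toProd.1)).sum| := abs_add_le _ _
      _ ≤ (l₁.length : ℤ) + l₂.length := by
          gcongr
          · have := abs_sum_le (l := l₁.map (fun d => ψ d.toProd.2 - ψ d.toProd.1)) ?_
            · simpa using this
            · intro x hx
              obtain ⟨d, hd, rfl⟩ := List.mem_map.mp hx
              exact hother d (by simp [hd])
          · have := abs_sum_le (l := l₂.map (fun d => ψ d.toProd.2 - ψ d.toProd.1)) ?_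
            · simpa using this
            · intro x hx
              obtain ⟨d, hd, rfl⟩ := List.mem_map.mp hx
              exact hother d (by simp [hd])
    have hlen : w.length = l₁.length + 1 + l₂.length := by
      rw [← w.length_darts, hsplit]
      simp
      omega
    have habs : |ψ dstar.toProd.2 - ψ dstar.toProd.1| =
        |(l₁.map (fun d => ψ d.toProd.2 - ψ d.toProd.1)).sum
          + (l₂.map (fun d => ψ d.toProd.2 - ψ d.toProd.1)).sum| := by
      have : (l₁.map (fun d => ψ d.toProd.2 - ψ d.toProd.1)).sum
          + (l₂.map (fun d => ψ d.toProd.2 - ψ d.toProd.1)).sum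
          = -(ψ dstar.toProd.2 - ψ dstar.toProd.1) := by linarith [tele]
      rw [this, abs_neg]
    rw [← habs, hτ] at hS
    omega
  · -- no closing edge used: contradiction by the maximum argument
    exfalso
    set ℓ := w.length with hℓ
    have hℓ3 : 3 ≤ ℓ := hc.three_le_length
    set F : ℕ → ℤ := fun j => ((w.getVert (j + 1)).2 : ℕ) with hF
    have hstep : ∀ j < ℓ, F ((if j = ℓ - 1 then 0 else j + 1)) = F j + 1 ∨
        F ((if j = ℓ - 1 then 0 else j + 1)) = F j - 1 := by
      intro j hj
      have hrel : ∀ k < ℓ, ((w.getVert (k+1)).2 : ℤ) = ((w.getVert k).2 : ℕ) + 1 ∨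
          ((w.getVert (k+1)).2 : ℤ) = ((w.getVert k).2 : ℕ) - 1 := by
        intro k hk
        have hadj := w.adj_getVert_succ hk
        have hmem1 : w.getVert k ∈ w.support :=
          Walk.mem_support_iff_exists_getVert.mpr ⟨k, rfl, by omega⟩
        have hmem2 : w.getVert (k+1) ∈ w.support :=
          Walk.mem_support_iff_exists_getVert.mpr ⟨k+1, rfl, by omega⟩
        have hb1 := hblock _ hmem1
        have hb2 := hblock _ hmem2
        rcases adj_cases hadj with ⟨ht, hn | hn⟩ | ⟨ht, ⟨h1, h2⟩ | ⟨h1, h2⟩⟩ |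
          ⟨ht, -, -⟩ | ⟨ht, -, -⟩
        · left; omega
        · right; omega
        · exfalso
          apply he₂
          have e1 : w.getVert k = (v.1, (⟨0, hL0⟩ : Fin L)) := Prod.ext hb1 (Fin.ext h1)
          have e2 : w.getVert (k+1) = (v.1, (⟨L-1, by omega⟩ : Fin L)) := Prod.ext hb2 (Fin.ext h2)
          have := edge_getVert_mem w hk
          rwa [e1, e2] at this
        · exfalso
          apply he₂
          have e1 : w.getVert (k+1) = (v.1, (⟨0, hL0⟩ : Fin L)) := Prod.ext hb2 (Fin.ext h1)
          have e2 : w.getVert k = (v.1, (⟨L-1, by omega⟩ : Fin L)) := Prod.ext hb1 (Fin.ext h2)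
          have := edge_getVert_mem w hk
          rw [e1, e2] at this
          rwa [Sym2.eq_swap] at this
        · rw [hb1, hb2] at ht; omega
        · rw [hb1, hb2] at ht; omega
      by_cases hjtop : j = ℓ - 1
      · rw [if_pos hjtop]
        have h0 := hrel 0 (by omega)
        have hwrap : w.getVert (j + 1) = w.getVert 0 := by
          rw [hjtop, show ℓ - 1 + 1 = ℓ by omega, hℓ]
          rw [Walk.getVert_length, Walk.getVert_zero]
        simp only [hF]
        rw [hwrap]
        rcases h0 with h | h
        · left; omega
        · right; omega
      · rw [if_neg hjtop]
        have := hrel (j + 1) (by omega)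
        simp only [hF]
        rcases this with h | h
        · left; omega
        · right; omega
    have hinj : ∀ a < ℓ, ∀ b < ℓ, F a = F b → a = b := by
      intro a ha b hb hab
      have hlen : w.support.tail.length = ℓ := by
        rw [List.length_tail, w.length_support]
        omega
      have hga : w.support.tail[a]'(by omega) = w.getVert (a+1) := tail_get w (by omega)
      have hgb : w.support.tail[b]'(by omega) = w.getVert (b+1) := tail_get w (by omega)
      have hveq : w.getVert (a+1) = w.getVert (b+1) := by
        apply Prod.ext
        · rw [hblock _ (Walk.mem_support_iff_exists_getVert.mpr ⟨a+1, rfl, by omega⟩),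
            hblock _ (Walk.mem_support_iff_exists_getVert.mpr ⟨b+1, rfl, by omega⟩)]
        · apply Fin.ext
          simp only [hF] at hab
          exact_mod_cast hab
      rw [← hga, ← hgb] at hveq
      exact (List.Nodup.getElem_inj_iff hc.support_nodup).mp hveq
    obtain ⟨jm, hjmmem, hmax⟩ := Finset.exists_max_image (Finset.range ℓ) F
      ⟨0, Finset.mem_range.mpr (by omega)⟩
    have hjm : jm < ℓ := Finset.mem_range.mp hjmmem
    set s : ℕ := if jm = ℓ - 1 then 0 else jm + 1 with hs
    set p : ℕ := if jm = 0 then ℓ - 1 else jm - 1 with hp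
    have hsℓ : s < ℓ := by rw [hs]; split <;> omega
    have hpℓ : p < ℓ := by rw [hp]; split <;> omega
    have hsp : s ≠ p := by
      rw [hs, hp]
      by_cases h0 : jm = 0
      · rw [if_neg (by omega), if_pos h0]; omega
      · by_cases htop : jm = ℓ - 1
        · rw [if_pos htop, if_neg h0]; omega
        · rw [if_neg htop, if_neg h0]; omega
    have hsucp : (if p = ℓ - 1 then 0 else p + 1) = jm := by
      rw [hp]
      by_cases h0 : jm = 0
      · rw [if_pos h0, if_pos rfl]; omega
      · rw [if_neg h0, if_neg (by omega)]; omega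
    have h1 := hstep jm hjm
    have h2 := hstep p hpℓ
    rw [hsucp] at h2
    have hFs : F s = F jm - 1 := by
      rcases h1 with h | h
      · exfalso
        have := hmax s (Finset.mem_range.mpr hsℓ)
        rw [← hs] at h
        omega
      · rw [← hs] at h; exact h
    have hFp : F p = F jm - 1 := by
      rcases h2 with h | h
      · omega
      · exfalso
        have := hmax p (Finset.mem_range.mpr hpℓ)
        omega
    exact hsp (hinj s hsℓ p hpℓ (by omega))

end S4

/-- There are connected graphs with difference index `2`, arbitrarily large
sum index, and arbitrarily large girth. -/
theorem stmt4 (N g : ℕ) :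
    ∃ (V : Type) (_ : Fintype V) (G : SimpleGraph V),
      G.Connected ∧ diffIndex G = 2 ∧ N ≤ sumIndex G ∧ (g : ℕ∞) ≤ G.egirth := by
  classical
  set g' : ℕ := max g 3 with hg'
  set L : ℕ := 2 * g' + 1 with hLdef
  have hL : 3 ≤ L := by omega
  have hLne : L ≠ 0 := by omega
  have hodd : Odd L := ⟨g', by omega⟩
  set N' : ℕ := max N 1 with hN'
  set M : ℕ := N' ^ L with hMdef
  have hM : 0 < M := Nat.pow_pos (by omega)
  refine ⟨Fin M × Fin L, inferInstance, S4.G M L, S4.conn hL hM, ?_, ?_, ?_⟩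
  · -- difference index is 2
    have hmem2 : (2 : ℕ) ∈ {n | ∃ f : Fin M × Fin L → ℤ, Function.Injective f ∧
        {s : ℤ | ∃ u v, (S4.G M L).Adj u v ∧ s = |f u - f v|}.ncard = n} := by
      refine ⟨S4.f0 M L, S4.f0_inj, ?_⟩
      rw [S4.diffset_f0 hL hM]
      exact Set.ncard_pair (by
        have : (3 : ℤ) ≤ (L : ℤ) := by exact_mod_cast hL
        omega)
    apply le_antisymm
    · exact Nat.sInf_le hmem2
    · have hsmem := Nat.sInf_mem (⟨2, hmem2⟩ : Set.Nonempty _)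
      obtain ⟨f, hf, hcard⟩ := hsmem
      have h2le : 2 ≤ (S4.Dset (M := M) (L := L) f).ncard := S4.dind_lower hL hM f hf
      exact le_trans h2le (le_of_eq hcard)
  · -- sum index is at least N
    have hmem : ∃ n, n ∈ {n | ∃ f : Fin M × Fin L → ℤ, Function.Injective f ∧
        {s : ℤ | ∃ u v, (S4.G M L).Adj u v ∧ s = f u + f v}.ncard = n} :=
      ⟨_, S4.f0 M L, S4.f0_inj, rfl⟩
    have hsmem := Nat.sInf_mem hmem
    obtain ⟨f, hf, hcard⟩ := hsmem
    have hlb := S4.sum_lb hL hodd f hf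
    have hcard' : (S4.SSet (M := M) (L := L) f).ncard = sumIndex (S4.G M L) := hcard
    rw [hcard'] at hlb
    have hpow : N' ^ L ≤ (sumIndex (S4.G M L)) ^ L := by rw [← hMdef]; exact hlb
    have hN'le : N' ≤ sumIndex (S4.G M L) :=
      (Nat.pow_le_pow_iff_left hLne).mp hpow
    exact le_trans (le_max_left N 1) hN'le
  · -- girth
    rw [le_egirth]
    intro a w hw
    have := S4.cycle_long hL w hw
    have hgL : g ≤ w.length := by omega
    exact_mod_cast Nat.cast_le.mpr hgL
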